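/- Let p be an odd prime, m ≥ 6 an integer with ord_2(b_m) = 2 where b_m is as defined, a_m odd coprime to b_m, and let x be a positive even integer with gcd(x, a_m·x − b_m) even. Then ord_2(gcd(x, a_m·x − b_m)) = 2, and one of ord_2(x), ord_2(a_m·x − b_m) equals 2 while the other is at least p − 1 whenever x·(x+1)·(a_m x − b_m) = c_m·y^p with ord_2(c_m) = 1. -/

import Mathlib

private lemma val_eq_of {z : ℤ} (hz : z ≠ 0) {k : ℕ} (h1 : (2:ℤ)^k ∣ z)
    (h2 : ¬ (2:ℤ)^(k+1) ∣ z) : padicValInt 2 z = k := by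
  haveI : Fact (Nat.Prime 2) := ⟨by norm_num⟩
  have hk : k ≤ padicValInt 2 z := by
    have := (padicValInt_dvd_iff (p := 2) k z).mp (by exact_mod_cast h1)
    tauto
  have hk2 : ¬ (k+1 ≤ padicValInt 2 z) := fun h => h2 (by
    have := (padicValInt_dvd_iff (p := 2) (k+1) z).mpr (Or.inr h)
    exact_mod_cast this)
  omega

private lemma le_val_of {z : ℤ} (hz : z ≠ 0) {k : ℕ} (h1 : (2:ℤ)^k ∣ z) :
    k ≤ padicValInt 2 z := by
  haveI : Fact (Nat.Prime 2) := ⟨by norm_num⟩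
  have := (padicValInt_dvd_iff (p := 2) k z).mp (by exact_mod_cast h1)
  tauto

private lemma dvd_of_le_val {z : ℤ} {k : ℕ} (h : k ≤ padicValInt 2 z) :
    (2:ℤ)^k ∣ z := by
  haveI : Fact (Nat.Prime 2) := ⟨by norm_num⟩
  have := (padicValInt_dvd_iff (p := 2) k z).mpr (Or.inr h)
  exact_mod_cast this

theorem ord2_gcd_case3 (p : ℕ) (hp : p.Prime) (hpodd : Odd p)
    (m : ℤ) (hm : 6 ≤ m)
    (a b c x y : ℤ) (ha : 0 < a) (hb : 0 < b) (hc : 0 < c) (hx : 0 < x) (hy : 0 < y)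
    (hb2 : padicValInt 2 b = 2) (haodd : Odd a) (hab : IsCoprime a b)
    (hxeven : Even x) (hgcdeven : 2 ∣ Int.gcd x (a * x - b))
    (hc2 : padicValInt 2 c = 1)
    (heq : x * (x + 1) * (a * x - b) = c * y ^ p) :
    padicValNat 2 (Int.gcd x (a * x - b)) = 2 ∧
      ((padicValInt 2 x = 2 ∧ (p - 1 : ℕ) ≤ padicValInt 2 (a * x - b)) ∨
       (padicValInt 2 (a * x - b) = 2 ∧ (p - 1 : ℕ) ≤ padicValInt 2 x)) := by
  haveI : Fact (Nat.Prime 2) := ⟨by norm_num⟩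
  have hx0 : x ≠ 0 := hx.ne'
  have hc0 : c ≠ 0 := hc.ne'
  have hy0 : y ≠ 0 := hy.ne'
  have hz0 : a * x - b ≠ 0 := by
    intro h
    rw [h, mul_zero] at heq
    exact (mul_pos hc (pow_pos hy p)).ne' heq.symm
  set v := padicValInt 2 x with hv
  set w := padicValInt 2 (a * x - b) with hw
  set k := padicValInt 2 y with hk
  -- valuation of a*x equals v
  have hax : padicValInt 2 (a * x) = v := by
    rw [padicValInt.mul (by exact_mod_cast ha.ne') hx0,
      padicValInt.eq_zero_of_not_dvd (by
        have := Int.odd_iff.mp haodd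
        push_cast
        omega), zero_add]
  -- main valuation equation
  have hmain : v + w = 1 + p * k := by
    have h1 : padicValInt 2 (x * (x + 1) * (a * x - b)) = v + w := by
      rw [padicValInt.mul (mul_ne_zero hx0 (by omega)) hz0,
        padicValInt.mul hx0 (by omega : x + 1 ≠ 0),
        padicValInt.eq_zero_of_not_dvd (z := x + 1) (by
          rcases hxeven with ⟨t, ht⟩
          push_cast
          omega), add_zero]
    have h2 : padicValInt 2 (c * y ^ p) = 1 + p * k := by
      rw [padicValInt.mul hc0 (pow_ne_zero p hy0), hc2]
      congr 1
      rw [padicValInt, Int.natAbs_pow, padicValNat.pow y.natAbs p]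
      rfl
    rw [← h1, ← h2, heq]
  have hb4 : (4:ℤ) ∣ b := by
    have := dvd_of_le_val (z := b) (k := 2) (by rw [hb2])
    norm_num at this ⊢; exact this
  have hb8 : ¬ (8:ℤ) ∣ b := by
    intro h
    have := le_val_of hb.ne' (k := 3) (by norm_num; exact h)
    omega
  have hv1 : 1 ≤ v := by
    refine le_val_of hx0 ?_
    rcases hxeven with ⟨t, ht⟩
    exact ⟨t, by omega⟩
  -- gcd valuation = min v w
  have hgcdval : padicValNat 2 (Int.gcd x (a * x - b)) = min v w := by
    have h1 : x.natAbs ≠ 0 := Int.natAbs_ne_zero.mpr hx0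
    have h2 : (a * x - b).natAbs ≠ 0 := Int.natAbs_ne_zero.mpr hz0
    have hgf := Nat.factorization_gcd h1 h2
    have := congrArg (fun f => f 2) hgf
    simp only [Finsupp.inf_apply] at this
    rw [Int.gcd, ← Nat.factorization_def _ (by norm_num : Nat.Prime 2), this,
      Nat.factorization_def _ (by norm_num : Nat.Prime 2),
      Nat.factorization_def _ (by norm_num : Nat.Prime 2)]
    rfl
  -- case analysis on v
  rcases lt_trichotomy v 2 with hv2 | hv2 | hv2
  · -- v = 1 : contradiction
    exfalso
    have hveq : v = 1 := by omega
    have hweq : w = 1 := by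
      refine val_eq_of hz0 ?_ ?_
      · rcases hxeven with ⟨t, ht⟩
        rcases hb4 with ⟨t', ht'⟩
        exact ⟨a * t - 2 * t', by rw [ht, ht']; ring⟩
      · intro h
        norm_num at h
        have h4ax : (4:ℤ) ∣ a * x := by omega
        have := le_val_of (mul_ne_zero (by exact_mod_cast ha.ne') hx0) (k := 2)
          (by norm_num; exact h4ax)
        rw [hax] at this; omega
    rw [hveq, hweq] at hmain
    have hp2 : 2 ≤ p := hp.two_le
    rcases Nat.eq_zero_or_pos k with h | h
    · rw [h, mul_zero] at hmain; omega
    · have hle : p ≤ p * k := Nat.le_mul_of_pos_right p h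
      omega
  · -- v = 2
    -- x = 4s with s odd, b = 4t with t odd
    have h4x : (4:ℤ) ∣ x := by
      have := dvd_of_le_val (z := x) (k := 2) (by omega)
      norm_num at this; exact this
    have h8x : ¬ (8:ℤ) ∣ x := by
      intro h
      have := le_val_of hx0 (k := 3) (by norm_num; exact h)
      omega
    have hw3 : 3 ≤ w := by
      refine le_val_of hz0 ?_
      rcases h4x with ⟨s, hs⟩
      rcases hb4 with ⟨t, ht⟩
      have hsodd : ¬ (2:ℤ) ∣ s := fun ⟨u, hu⟩ => h8x ⟨u, by omega⟩
      have htodd : ¬ (2:ℤ) ∣ t := fun ⟨u, hu⟩ => hb8 ⟨u, by omega⟩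
      have hsodd2 : Odd s := Int.odd_iff.mpr (by omega)
      have htodd2 : Odd t := Int.odd_iff.mpr (by omega)
      have hast : (a * s - t) % 2 = 0 := by
        have h1 : a * s % 2 = 1 := Int.odd_iff.mp (haodd.mul hsodd2)
        have h2 : t % 2 = 1 := Int.odd_iff.mp htodd2
        omega
      have h2ast : (2:ℤ) ∣ a * s - t := Int.dvd_of_emod_eq_zero hast
      rcases h2ast with ⟨u, hu⟩
      refine ⟨u, ?_⟩
      rw [hs, ht]
      linear_combination 4 * hu
    have hkpos : 1 ≤ k := by
      by_contra h
      have h0 : k = 0 := by omega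
      rw [h0, mul_zero] at hmain
      omega
    have hle : p ≤ p * k := Nat.le_mul_of_pos_right p hkpos
    exact ⟨by rw [hgcdval]; omega, Or.inl ⟨hv2, by omega⟩⟩
  · -- v ≥ 3
    have h8x : (8:ℤ) ∣ x := by
      have := dvd_of_le_val (z := x) (k := 3) (by omega)
      norm_num at this; exact this
    have hweq : w = 2 := by
      refine val_eq_of hz0 ?_ ?_
      · rcases h8x with ⟨s, hs⟩
        rcases hb4 with ⟨t, ht⟩
        exact ⟨2 * a * s - t, by rw [hs, ht]; ring⟩
      · intro h
        norm_num at h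
        rcases h8x with ⟨s, hs⟩
        rcases h with ⟨u, hu⟩
        exact hb8 ⟨a * s - u, by rw [hs] at hu; linarith [hu]⟩
    rw [hweq] at hmain
    have hkpos : 1 ≤ k := by
      by_contra h
      have h0 : k = 0 := by omega
      rw [h0, mul_zero] at hmain
      omega
    have hle : p ≤ p * k := Nat.le_mul_of_pos_right p hkpos
    exact ⟨by rw [hgcdval]; omega, Or.inr ⟨hweq, by omega⟩⟩
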